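/- Let A be a square matrix over ℝ of the form [[0, I],[D, 0]] in n+n block form where D is symmetric positive definite. Then A is diagonalizable over ℝ with eigenvalues ±√μ for each eigenvalue μ of D. -/

import Mathlib

theorem wave_operator_symbol_diagonalizable
    {n : Type*} [Fintype n] [DecidableEq n]
    (D : Matrix n n ℝ) (hD : D.PosDef) :
    (∃ P : Matrix (n ⊕ n) (n ⊕ n) ℝ, IsUnit P.det ∧
      ∃ d : n ⊕ n → ℝ,
        P⁻¹ * Matrix.fromBlocks (0 : Matrix n n ℝ) (1 : Matrix n n ℝ) D (0 : Matrix n n ℝ) * P = Matrix.diagonal d) ∧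
    spectrum ℝ (Matrix.fromBlocks (0 : Matrix n n ℝ) (1 : Matrix n n ℝ) D (0 : Matrix n n ℝ)) =
      {x : ℝ | ∃ μ ∈ spectrum ℝ D, x = Real.sqrt μ ∨ x = -Real.sqrt μ} := by
  classical
  set A : Matrix (n ⊕ n) (n ⊕ n) ℝ :=
    Matrix.fromBlocks (0 : Matrix n n ℝ) (1 : Matrix n n ℝ) D (0 : Matrix n n ℝ) with hA
  have hH : D.IsHermitian := hD.1
  set ev : n → ℝ := hH.eigenvalues with hev
  have hpos : ∀ i, 0 < ev i := hD.eigenvalues_pos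
  set U : Matrix n n ℝ := (hH.eigenvectorUnitary : Matrix n n ℝ) with hU
  have hUU : U * star U = 1 := Unitary.mul_star_self_of_mem hH.eigenvectorUnitary.2
  have hUU' : star U * U = 1 := Unitary.star_mul_self_of_mem hH.eigenvectorUnitary.2
  have hspec : D = U * Matrix.diagonal ev * star U := by
    have := hH.spectral_theorem
    simpa using this
  have hDU : D * U = U * Matrix.diagonal ev := by
    rw [hspec, mul_assoc, mul_assoc, hUU', mul_one]
  set S : Matrix n n ℝ := Matrix.diagonal (fun i => Real.sqrt (ev i)) with hS
  set S' : Matrix n n ℝ := Matrix.diagonal (fun i => (Real.sqrt (ev i))⁻¹) with hS'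
  have hSS : S * S = Matrix.diagonal ev := by
    rw [hS, Matrix.diagonal_mul_diagonal]
    have : (fun i => Real.sqrt (ev i) * Real.sqrt (ev i)) = ev :=
      funext fun i => Real.mul_self_sqrt (hpos i).le
    rw [this]
  have hSne : ∀ i, Real.sqrt (ev i) ≠ 0 := fun i =>
    ne_of_gt (Real.sqrt_pos.mpr (hpos i))
  have hSS' : S * S' = 1 := by
    rw [hS, hS', Matrix.diagonal_mul_diagonal, ← Matrix.diagonal_one]
    have : (fun i => Real.sqrt (ev i) * (Real.sqrt (ev i))⁻¹) = fun _ : n => (1:ℝ) :=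
      funext fun i => mul_inv_cancel₀ (hSne i)
    rw [this]
  set P : Matrix (n ⊕ n) (n ⊕ n) ℝ := Matrix.fromBlocks U U (U * S) (-(U * S)) with hP
  set Q : Matrix (n ⊕ n) (n ⊕ n) ℝ :=
    Matrix.fromBlocks ((1/2 : ℝ) • star U) ((1/2 : ℝ) • (S' * star U))
      ((1/2 : ℝ) • star U) (-((1/2 : ℝ) • (S' * star U))) with hQ
  have hT : U * S * (S' * star U) = 1 := by
    rw [show U * S * (S' * star U) = U * (S * S') * star U by noncomm_ring, hSS', mul_one, hUU]
  have hPQ : P * Q = 1 := by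
    rw [hP, hQ, Matrix.fromBlocks_multiply]
    have e11 : U * ((1/2 : ℝ) • star U) + U * ((1/2 : ℝ) • star U) = (1 : Matrix n n ℝ) := by
      rw [Matrix.mul_smul, hUU, ← add_smul]; norm_num
    have e12 : U * ((1/2 : ℝ) • (S' * star U)) + U * (-((1/2 : ℝ) • (S' * star U)))
        = (0 : Matrix n n ℝ) := by
      rw [Matrix.mul_neg]; abel
    have e21 : U * S * ((1/2 : ℝ) • star U) + -(U * S) * ((1/2 : ℝ) • star U)
        = (0 : Matrix n n ℝ) := by
      rw [Matrix.neg_mul]; abel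
    have e22 : U * S * ((1/2 : ℝ) • (S' * star U)) + -(U * S) * (-((1/2 : ℝ) • (S' * star U)))
        = (1 : Matrix n n ℝ) := by
      rw [Matrix.neg_mul, Matrix.mul_neg, neg_neg, Matrix.mul_smul, hT, ← add_smul]
      norm_num
    rw [e11, e12, e21, e22, Matrix.fromBlocks_one]
  have hQP : Q * P = 1 := mul_eq_one_comm.mp hPQ
  have hPdet : IsUnit P.det := Matrix.isUnit_det_of_right_inverse hPQ
  have hPunit : IsUnit P := P.isUnit_iff_isUnit_det.mpr hPdet
  set d : n ⊕ n → ℝ :=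
    Sum.elim (fun i => Real.sqrt (ev i)) (fun i => -Real.sqrt (ev i)) with hd
  have hdiag : Matrix.diagonal d = Matrix.fromBlocks S 0 0 (-S) := by
    rw [hd, ← Matrix.fromBlocks_diagonal, Matrix.diagonal_neg]
  have hDUSS : D * U = U * S * S := by
    rw [hDU, ← hSS, mul_assoc]
  have hAP : A * P = P * Matrix.diagonal d := by
    rw [hdiag, hA, hP, Matrix.fromBlocks_multiply, Matrix.fromBlocks_multiply]
    have e11 : (0 : Matrix n n ℝ) * U + 1 * (U * S) = U * S + U * 0 := by simp
    have e12 : (0 : Matrix n n ℝ) * U + 1 * (-(U * S)) = U * 0 + U * (-S) := by simp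
    have e21 : D * U + (0 : Matrix n n ℝ) * (U * S) = U * S * S + -(U * S) * 0 := by
      simp [hDUSS]
    have e22 : D * U + (0 : Matrix n n ℝ) * (-(U * S)) = U * S * 0 + -(U * S) * (-S) := by
      simp [hDUSS]
    rw [e11, e12, e21, e22]
  have hPinv : P⁻¹ = Q := Matrix.inv_eq_left_inv hQP
  constructor
  · exact ⟨P, hPdet, d, by rw [mul_assoc, hAP, ← mul_assoc, hPinv, hQP, one_mul]⟩
  · -- spectrum part
    have hAconj : A = P * Matrix.diagonal d * P⁻¹ := by
      rw [hPinv]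
      calc A = A * (P * Q) := by rw [hPQ, mul_one]
        _ = (A * P) * Q := by rw [mul_assoc]
        _ = P * Matrix.diagonal d * Q := by rw [hAP]
    have hu : IsUnit (P : Matrix (n ⊕ n) (n ⊕ n) ℝ) := hPunit
    obtain ⟨u, hu⟩ := hu
    have huinv : (↑u⁻¹ : Matrix (n ⊕ n) (n ⊕ n) ℝ) = P⁻¹ := by
      rw [← hu, Matrix.coe_units_inv]
    have hspecA : spectrum ℝ A = spectrum ℝ (Matrix.diagonal d) := by
      rw [hAconj, ← hu, ← Matrix.coe_units_inv, spectrum.units_conjugate]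
    rw [hspecA, spectrum_diagonal]
    have hDspec : spectrum ℝ D = Set.range ev := hH.spectrum_real_eq_range_eigenvalues
    ext x
    simp only [Set.mem_range, Set.mem_setOf_eq, hDspec, hd]
    constructor
    · rintro ⟨i | i, rfl⟩
      · exact ⟨ev i, ⟨i, rfl⟩, Or.inl rfl⟩
      · exact ⟨ev i, ⟨i, rfl⟩, Or.inr rfl⟩
    · rintro ⟨μ, ⟨i, rfl⟩, rfl | rfl⟩
      · exact ⟨Sum.inl i, rfl⟩
      · exact ⟨Sum.inr i, rfl⟩
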